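/- If G is a finite group of measurable transformations of a sample space X, T is a test statistic, the joint distribution of (T(aX))_{a∈G} is invariant under replacing X by gX for every g∈G, and k = ⌈(1-α)·#G⌉ with T^(1)(x) ≤ … ≤ T^(#G)(x) the sorted values of T(gx) over g∈G, then P(T(X) > T^(k)(X)) ≤ α. -/

import Mathlib

open MeasureTheory Finset
open scoped ENNReal

/-- The `k`-th smallest element (1-based) of a multiset of reals. -/
noncomputable def sortedVal (s : Multiset ℝ) (k : ℕ) : ℝ :=
  (s.sort (· ≤ ·)).getD (k - 1) 0

section lists

lemma take_le_pivot {l : List ℝ} (hl : l.Pairwise (· ≤ ·)) {k : ℕ} (hk2 : k ≤ l.length) :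
    ∀ x ∈ l.take k, x ≤ l.getD (k-1) 0 := by
  intro x hx
  rw [List.mem_take_iff_getElem] at hx
  obtain ⟨i, hi, rfl⟩ := hx
  have hik : i < k := lt_of_lt_of_le hi (min_le_left _ _)
  have hil : i < l.length := lt_of_lt_of_le hi (min_le_right _ _)
  have hk1 : 1 ≤ k := Nat.one_le_iff_ne_zero.mpr (by omega)
  have hkl : k - 1 < l.length := by omega
  rw [List.getD_eq_getElem l 0 hkl]
  rcases eq_or_lt_of_le (Nat.le_sub_one_of_lt hik) with h | h
  · simp [h]
  · simpa using hl.rel_get_of_lt (a := ⟨i, hil⟩) (b := ⟨k-1, hkl⟩) h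

lemma drop_ge_pivot {l : List ℝ} (hl : l.Pairwise (· ≤ ·)) {k : ℕ} (hk1 : 1 ≤ k)
    (hk2 : k ≤ l.length) : ∀ x ∈ l.drop (k-1), l.getD (k-1) 0 ≤ x := by
  intro x hx
  rw [List.mem_iff_getElem] at hx
  obtain ⟨i, hi, rfl⟩ := hx
  have hkl : k - 1 < l.length := by omega
  rw [List.getElem_drop, List.getD_eq_getElem l 0 hkl]
  have hil : k - 1 + i < l.length := by
    have := hi; simp [List.length_drop] at this; omega
  rcases Nat.eq_zero_or_pos i with h | h
  · simp [h]
  · simpa using hl.rel_get_of_lt (a := ⟨k-1, hkl⟩) (b := ⟨k-1+i, hil⟩) (by simp; omega)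

lemma list_count_lt_iff {l : List ℝ} (hl : l.Pairwise (· ≤ ·)) {k : ℕ} (hk1 : 1 ≤ k)
    (hk2 : k ≤ l.length) (c : ℝ) :
    l.getD (k-1) 0 < c ↔ k ≤ l.countP (fun x => decide (x < c)) := by
  constructor
  · intro h
    have := List.take_append_drop k l
    calc k = (l.take k).length := by simp [List.length_take]; omega
    _ = (l.take k).countP (fun x => decide (x < c)) := by
        symm; rw [List.countP_eq_length]
        intro a ha
        simpa using lt_of_le_of_lt (take_le_pivot hl hk2 a ha) h
    _ ≤ l.countP (fun x => decide (x < c)) := by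
        conv_rhs => rw [← List.take_append_drop k l]
        rw [List.countP_append]; omega
  · intro h
    by_contra hc
    push_neg at hc
    have h0 : (l.drop (k-1)).countP (fun x => decide (x < c)) = 0 := by
      rw [List.countP_eq_zero]
      intro a ha
      simpa using not_lt_of_ge (le_trans hc (drop_ge_pivot hl hk1 hk2 a ha))
    have : l.countP (fun x => decide (x < c)) ≤ k - 1 := by
      conv_lhs => rw [← List.take_append_drop (k-1) l]
      rw [List.countP_append, h0]
      have := (l.take (k-1)).countP_le_length (p := fun x => decide (x < c))
      simp [List.length_take] at this ⊢
      omega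
    omega

lemma list_count_gt_le {l : List ℝ} (hl : l.Pairwise (· ≤ ·)) {k : ℕ} (hk1 : 1 ≤ k)
    (hk2 : k ≤ l.length) :
    l.countP (fun x => decide (l.getD (k-1) 0 < x)) ≤ l.length - k := by
  obtain ⟨c, hc⟩ : ∃ c, l.getD (k-1) 0 = c := ⟨_, rfl⟩
  rw [hc]
  have h0 : (l.take k).countP (fun x => decide (c < x)) = 0 := by
    rw [List.countP_eq_zero]
    intro a ha
    simpa using not_lt_of_ge (le_of_le_of_eq (take_le_pivot hl hk2 a ha) hc)
  conv_lhs => rw [← List.take_append_drop k l]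
  rw [List.countP_append, h0]
  have := (l.drop k).countP_le_length (p := fun x => decide (c < x))
  simp [List.length_drop] at this ⊢
  omega

end lists

section multisets

lemma multiset_count_lt_iff (s : Multiset ℝ) {k : ℕ} (hk1 : 1 ≤ k)
    (hk2 : k ≤ Multiset.card s) (c : ℝ) :
    sortedVal s k < c ↔ k ≤ Multiset.countP (fun x => x < c) s := by
  have h1 : Multiset.countP (fun x => x < c) s
      = (s.sort (· ≤ ·)).countP (fun x => decide (x < c)) := by
    conv_lhs => rw [← Multiset.sort_eq s (· ≤ ·)]
    rw [Multiset.coe_countP]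
  rw [h1]
  exact list_count_lt_iff (Multiset.pairwise_sort s _) hk1 (by rwa [Multiset.length_sort]) c

lemma multiset_count_gt_le (s : Multiset ℝ) {k : ℕ} (hk1 : 1 ≤ k)
    (hk2 : k ≤ Multiset.card s) :
    Multiset.countP (fun x => sortedVal s k < x) s ≤ Multiset.card s - k := by
  obtain ⟨c, hc⟩ : ∃ c, sortedVal s k = c := ⟨_, rfl⟩
  rw [hc]
  have h1 : Multiset.countP (fun x => c < x) s
      = (s.sort (· ≤ ·)).countP (fun x => decide (c < x)) := by
    conv_lhs => rw [← Multiset.sort_eq s (· ≤ ·)]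
    rw [Multiset.coe_countP]
  rw [h1, ← Multiset.length_sort (· ≤ ·) (s := s)]
  have h2 : (s.sort (· ≤ ·)).getD (k-1) 0 = c := hc
  have := list_count_gt_le (Multiset.pairwise_sort s (· ≤ ·)) hk1
    (by rwa [Multiset.length_sort] : k ≤ (s.sort (· ≤ ·)).length)
  rwa [h2] at this

end multisets

/-- the basic permutation test with the full group has level at most α. -/
theorem basic_permutation_test_level
    {Ω 𝒳 G : Type*} [MeasurableSpace Ω] [MeasurableSpace 𝒳]
    [Group G] [Fintype G] [MulAction G 𝒳]
    (P : Measure Ω) [IsProbabilityMeasure P]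
    (X : Ω → 𝒳) (hX : Measurable X)
    (hG : ∀ g : G, Measurable fun x : 𝒳 => g • x)
    (T : 𝒳 → ℝ) (hT : Measurable T)
    (α : ℝ) (hα : α ∈ Set.Ico (0 : ℝ) 1)
    (hinv : ∀ g : G,
      Measure.map (fun ω => fun a : G => T (a • X ω)) P =
        Measure.map (fun ω => fun a : G => T (a • g • X ω)) P) :
    (P {ω | T (X ω) >
        sortedVal (Multiset.map (fun g : G => T (g • X ω)) Finset.univ.val)
          (Nat.ceil ((1 - α) * (Fintype.card G : ℝ)))}).toReal ≤ α := by
  classical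
  set n : ℕ := Fintype.card G with hn
  set k : ℕ := Nat.ceil ((1 - α) * (n : ℝ)) with hk
  have hnpos : 0 < n := Fintype.card_pos
  have hnR : (0 : ℝ) < n := by exact_mod_cast hnpos
  have hk1 : 1 ≤ k := Nat.one_le_iff_ne_zero.mpr (by
    have : (0 : ℝ) < (1 - α) * n := mul_pos (by linarith [hα.2]) hnR
    exact Nat.pos_iff_ne_zero.mp (Nat.ceil_pos.mpr this))
  have hkn : k ≤ n := Nat.ceil_le.mpr (by nlinarith [hα.1])
  set f : Ω → G → ℝ := fun ω a => T (a • X ω) with hfdef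
  have hf : Measurable f :=
    measurable_pi_lambda _ fun a => hT.comp ((hG a).comp hX)
  set cnt : (G → ℝ) → G → ℕ :=
    fun v g => Multiset.countP (fun x => x < v g) (Multiset.map v Finset.univ.val) with hcnt
  set C : G → Set (G → ℝ) := fun g => {v | k ≤ cnt v g} with hCdef
  -- cardinality of the multiset
  have hcard : ∀ v : G → ℝ, Multiset.card (Multiset.map v Finset.univ.val) = n := by
    intro v; simp [hn]
  -- membership in C g ↔ v g exceeds the k-th smallest
  have hmem : ∀ (v : G → ℝ) (g : G),
      v ∈ C g ↔ sortedVal (Multiset.map v Finset.univ.val) k < v g := by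
    intro v g
    rw [hCdef]
    simp only [Set.mem_setOf_eq]
    rw [multiset_count_lt_iff _ hk1 (by rw [hcard]; exact hkn)]
  -- measurability of C g
  have hcnt_meas : ∀ g : G, Measurable fun v : G → ℝ => cnt v g := by
    intro g
    have : (fun v : G → ℝ => cnt v g)
        = fun v => ∑ a : G, if v a < v g then 1 else 0 := by
      funext v
      rw [hcnt]
      simp only [Multiset.countP_map]
      exact Finset.card_filter _ _
    rw [this]
    exact Finset.measurable_sum _ fun a _ =>
      Measurable.ite (measurableSet_lt (measurable_pi_apply a) (measurable_pi_apply g))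
        measurable_const measurable_const
  have hC : ∀ g : G, MeasurableSet (C g) := by
    intro g
    have : C g = (fun v => cnt v g) ⁻¹' {m : ℕ | k ≤ m} := rfl
    rw [this]
    exact (hcnt_meas g) trivial
  set μ : Measure (G → ℝ) := Measure.map f P with hμ
  have : IsProbabilityMeasure μ := Measure.isProbabilityMeasure_map hf.aemeasurable
  -- invariance: μ (C 1) = μ (C g)
  have hμinv : ∀ g : G, μ (C 1) = μ (C g) := by
    intro g
    set π : (G → ℝ) → G → ℝ := fun v a => v (a * g) with hπdef
    have hπ : Measurable π := measurable_pi_lambda _ fun a => measurable_pi_apply _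
    have hcomp : π ∘ f = fun ω => fun a : G => T (a • g • X ω) := by
      funext ω a
      simp [hπdef, hfdef, mul_smul]
    have hμπ : μ = Measure.map π μ := by
      rw [hμ, Measure.map_map hπ hf, hcomp]
      exact hinv g
    have hpre : π ⁻¹' (C 1) = C g := by
      ext v
      have huniv : Multiset.map (fun a : G => a * g) Finset.univ.val = Finset.univ.val := by
        have h := Finset.map_univ_equiv (Equiv.mulRight g)
        calc Multiset.map (fun a : G => a * g) Finset.univ.val
            = (Finset.univ.map (Equiv.mulRight g).toEmbedding).val := rfl
          _ = Finset.univ.val := by rw [h]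
      have hcnt_eq : cnt (π v) 1 = cnt v g := by
        rw [hcnt]
        simp only [hπdef, one_mul]
        have hvc : (fun x : G => v (x * g)) = v ∘ (fun a : G => a * g) := rfl
        rw [hvc, ← Multiset.map_map, huniv]
      simp only [Set.mem_preimage, hCdef, Set.mem_setOf_eq, hcnt_eq]
    calc μ (C 1) = Measure.map π μ (C 1) := by rw [← hμπ]
      _ = μ (π ⁻¹' C 1) := Measure.map_apply hπ (hC 1)
      _ = μ (C g) := by rw [hpre]
  -- pointwise counting bound
  have hpoint : ∀ v : G → ℝ,
      (∑ g : G, (C g).indicator (1 : (G → ℝ) → ℝ≥0∞) v) ≤ ((n - k : ℕ) : ℝ≥0∞) := by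
    intro v
    have h1 : (∑ g : G, (C g).indicator (1 : (G → ℝ) → ℝ≥0∞) v)
        = ((Finset.univ.filter fun g : G => v ∈ C g).card : ℝ≥0∞) := by
      simp only [Set.indicator_apply, Pi.one_apply]
      rw [Finset.sum_boole]
    rw [h1]
    have h2 : (Finset.univ.filter fun g : G => v ∈ C g).card
        = Multiset.countP (fun x => sortedVal (Multiset.map v Finset.univ.val) k < x)
            (Multiset.map v Finset.univ.val) := by
      have e1 : (Finset.univ.filter fun g : G => v ∈ C g)
          = Finset.univ.filter fun g : G =>
              sortedVal (Multiset.map v Finset.univ.val) k < v g :=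
        Finset.filter_congr fun g _ => hmem v g
      rw [e1, Multiset.countP_map]
      rfl
    rw [h2]
    have h3 := multiset_count_gt_le (Multiset.map v Finset.univ.val) hk1
      (by rw [hcard]; exact hkn)
    rw [hcard] at h3
    exact_mod_cast Nat.cast_le.mpr h3
  -- event rewriting
  have hEvent : {ω | T (X ω) >
      sortedVal (Multiset.map (fun g : G => T (g • X ω)) Finset.univ.val) k}
      = f ⁻¹' (C 1) := by
    ext ω
    simp only [Set.mem_setOf_eq, Set.mem_preimage]
    rw [hmem (f ω) 1]
    have h1 : f ω 1 = T (X ω) := by simp [hfdef, one_smul]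
    rw [show (fun g : G => T (g • X ω)) = f ω from rfl, ← h1]
  -- summing the measures
  have hsum_le : (n : ℝ≥0∞) * μ (C 1) ≤ ((n - k : ℕ) : ℝ≥0∞) := by
    have h1 : ∑ g : G, μ (C g) = (n : ℝ≥0∞) * μ (C 1) := by
      rw [Finset.sum_congr rfl fun (g : G) _ => (hμinv g).symm, Finset.sum_const,
        Finset.card_univ, nsmul_eq_mul]
    rw [← h1]
    calc ∑ g : G, μ (C g) = ∑ g : G, ∫⁻ v, (C g).indicator 1 v ∂μ := by
          refine Finset.sum_congr rfl fun g _ => ?_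
          rw [lintegral_indicator_one (hC g)]
      _ = ∫⁻ v, ∑ g : G, (C g).indicator 1 v ∂μ :=
          (lintegral_finset_sum _ fun g _ => measurable_one.indicator (hC g)).symm
      _ ≤ ∫⁻ _, ((n - k : ℕ) : ℝ≥0∞) ∂μ := lintegral_mono hpoint
      _ = ((n - k : ℕ) : ℝ≥0∞) := by simp
  have hPC : P {ω | T (X ω) >
      sortedVal (Multiset.map (fun g : G => T (g • X ω)) Finset.univ.val) k}
      = μ (C 1) := by
    rw [hEvent, hμ, Measure.map_apply hf (hC 1)]
  rw [hPC]
  have h2 : (n : ℝ) * (μ (C 1)).toReal ≤ ((n - k : ℕ) : ℝ) := by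
    have h3 := ENNReal.toReal_mono (by simp : ((n - k : ℕ) : ℝ≥0∞) ≠ ⊤) hsum_le
    rwa [ENNReal.toReal_mul, ENNReal.toReal_natCast, ENNReal.toReal_natCast] at h3
  have hkR : (1 - α) * (n : ℝ) ≤ (k : ℝ) := Nat.le_ceil _
  have hnk : ((n - k : ℕ) : ℝ) = (n : ℝ) - (k : ℝ) := by
    rw [Nat.cast_sub hkn]
  rw [hnk] at h2
  nlinarith [h2, hkR, hnR]
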